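/- Let 𝔾 be the Bruhat graph of a Weyl group W and suppose ε and ε' are two functions assigning ±1 to each edge of 𝔾 such that for every square (a configuration w → w'_1 → w'', w → w'_2 → w'' with w'_1 ≠ w'_2) the product of the values on its four edges equals −1. Then there exists a function γ : W → {±1} with γ(e) = 1 such that ε(w', w) = γ(w')⁻¹ ε'(w', w) γ(w) for every edge w' → w. -/
import Mathlib

namespace BGGsign

open CoxeterSystem List

attribute [local instance] Classical.propDecidable

variable {B W : Type} [Group W] {M : CoxeterMatrix B} (cs : CoxeterSystem M W)

lemma simple_conj_eq_iff (i : B) (x y : W) :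
    cs.simple i * x * cs.simple i = y ↔ x = cs.simple i * y * cs.simple i := by
  constructor
  · intro h
    rw [← h]
    simp [mul_assoc, cs.simple_mul_simple_cancel_left, cs.simple_mul_simple_self]
  · intro h
    rw [h]
    simp [mul_assoc, cs.simple_mul_simple_cancel_left, cs.simple_mul_simple_self]

/-- The sign permutation associated to a simple reflection. -/
noncomputable def eta (i : B) : Equiv.Perm (W × ℤˣ) :=
  Function.Involutive.toPerm
    (fun p => (cs.simple i * p.1 * cs.simple i, p.2 * (if p.1 = cs.simple i then -1 else 1)))
    (by
      intro p
      rw [Prod.ext_iff]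
      dsimp only
      constructor
      · simp [mul_assoc, cs.simple_mul_simple_cancel_left, cs.simple_mul_simple_self]
      · have h2 : (cs.simple i * p.1 * cs.simple i = cs.simple i) ↔ (p.1 = cs.simple i) := by
          rw [simple_conj_eq_iff]
          simp [cs.simple_mul_simple_self]
        by_cases h : p.1 = cs.simple i <;> simp [h, h2])

lemma eta_apply (i : B) (t : W) (ε : ℤˣ) :
    eta cs i (t, ε) = (cs.simple i * t * cs.simple i, ε * (if t = cs.simple i then -1 else 1)) :=
  rfl

lemma eta_mul_apply (i j : B) (t : W) (ε : ℤˣ) :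
    (eta cs i * eta cs j) (t, ε) =
      ((cs.simple i * cs.simple j) * t * (cs.simple i * cs.simple j)⁻¹,
        ε * ((if t = cs.simple j then -1 else 1) *
          (if t = cs.simple j * cs.simple i * cs.simple j then -1 else 1))) := by
  show eta cs i (eta cs j (t, ε)) = _
  rw [eta_apply, eta_apply]
  have h1 : cs.simple i * (cs.simple j * t * cs.simple j) * cs.simple i
      = (cs.simple i * cs.simple j) * t * (cs.simple i * cs.simple j)⁻¹ := by
    rw [mul_inv_rev, cs.inv_simple, cs.inv_simple]
    group
  have h2 : (cs.simple j * t * cs.simple j = cs.simple i)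
      ↔ (t = cs.simple j * cs.simple i * cs.simple j) := simple_conj_eq_iff cs j t _
  rw [Prod.ext_iff]
  dsimp only
  constructor
  · exact h1
  · rw [mul_assoc]
    congr 2
    simp only [h2]

lemma conj_chain {G : Type*} [Group G] (q r : G) (h : q⁻¹ * r = r * q) (a : ℕ) (t : G) :
    (q * t * q⁻¹ = r * q ^ a) ↔ (t = r * q ^ (a + 2)) := by
  have hqr : q * r = r * q⁻¹ := by
    calc q * r = q * (r * q) * q⁻¹ := by group
      _ = q * (q⁻¹ * r) * q⁻¹ := by rw [h]
      _ = r * q⁻¹ := by group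
  constructor
  · intro hc
    have ht : t = q⁻¹ * (r * q ^ a) * q := by rw [← hc]; group
    rw [ht, show q⁻¹ * (r * q ^ a) * q = (q⁻¹ * r) * q ^ (a + 1) from by group, h]
    group
  · intro hc
    rw [hc, show q * (r * q ^ (a + 2)) * q⁻¹ = (q * r) * q ^ (a + 1) from by group, hqr]
    group

lemma eta_pow_apply (i j : B) : ∀ (n : ℕ) (t : W) (ε : ℤˣ),
    ((eta cs i * eta cs j) ^ n) (t, ε) =
      ((cs.simple i * cs.simple j) ^ n * t * ((cs.simple i * cs.simple j) ^ n)⁻¹,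
        ε * ∏ a ∈ Finset.range (2 * n),
          (if t = cs.simple j * (cs.simple i * cs.simple j) ^ a then (-1 : ℤˣ) else 1)) := by
  intro n
  induction n with
  | zero => intro t ε; simp
  | succ n ih =>
    intro t ε
    rw [pow_succ, Equiv.Perm.mul_apply, eta_mul_apply, ih, Prod.ext_iff]
    dsimp only
    set Q := cs.simple i * cs.simple j with hQ
    have hq'r : Q⁻¹ * cs.simple j = cs.simple j * Q := by
      rw [hQ, mul_inv_rev, cs.inv_simple, cs.inv_simple, mul_assoc]
    have hcond := conj_chain Q (cs.simple j) hq'r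
    constructor
    · group
    · have hL : (∏ a ∈ Finset.range (2 * n),
          (if Q * t * Q⁻¹ = cs.simple j * Q ^ a then (-1:ℤˣ) else 1))
          = ∏ a ∈ Finset.range (2 * n),
          (if t = cs.simple j * Q ^ (a + 2) then (-1:ℤˣ) else 1) :=
        Finset.prod_congr rfl (fun a _ => if_congr (hcond a t) rfl rfl)
      rw [hL, show 2 * (n + 1) = 2 * n + 1 + 1 from by ring, Finset.prod_range_succ',
        Finset.prod_range_succ']
      have h0 : (if t = cs.simple j * Q ^ (0:ℕ) then (-1:ℤˣ) else 1)
          = (if t = cs.simple j then -1 else 1) := by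
        norm_num
      have h1 : (if t = cs.simple j * Q ^ (0+1:ℕ) then (-1:ℤˣ) else 1)
          = (if t = cs.simple j * cs.simple i * cs.simple j then -1 else 1) := by
        rw [pow_one, hQ, ← mul_assoc]
      have h2 : (∏ a ∈ Finset.range (2 * n),
          (if t = cs.simple j * Q ^ (a + 1 + 1) then (-1:ℤˣ) else 1))
          = ∏ a ∈ Finset.range (2 * n),
          (if t = cs.simple j * Q ^ (a + 2) then (-1:ℤˣ) else 1) :=
        Finset.prod_congr rfl (fun a _ => by norm_num)
      rw [h0, h1, h2]
      simp only [mul_comm, mul_left_comm, mul_assoc]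

lemma eta_liftable : M.IsLiftable (fun i => eta cs i) := by
  intro i j
  apply Equiv.ext
  rintro ⟨t, ε⟩
  rw [eta_pow_apply]
  have hq : (cs.simple i * cs.simple j) ^ M i j = 1 := cs.simple_mul_simple_pow i j
  have hsign : (∏ a ∈ Finset.range (2 * M i j),
      (if t = cs.simple j * (cs.simple i * cs.simple j) ^ a then (-1:ℤˣ) else 1)) = 1 := by
    rw [two_mul, Finset.prod_range_add]
    have he : ∀ a : ℕ, (if t = cs.simple j * (cs.simple i * cs.simple j) ^ (M i j + a)
        then (-1:ℤˣ) else 1)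
        = (if t = cs.simple j * (cs.simple i * cs.simple j) ^ a then (-1:ℤˣ) else 1) := by
      intro a
      rw [pow_add, hq, one_mul]
    rw [Finset.prod_congr rfl (fun a _ => he a)]
    exact Int.units_mul_self _
  rw [hq, hsign]
  simp

/-- The sign representation of the Coxeter group on reflections. -/
noncomputable def permRep : W →* Equiv.Perm (W × ℤˣ) :=
  cs.lift ⟨fun i => eta cs i, eta_liftable cs⟩

lemma permRep_simple (i : B) : permRep cs (cs.simple i) = eta cs i :=
  cs.lift_apply_simple (eta_liftable cs) i

/-- The sign of `t` at `w`. -/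
noncomputable def sgn (w t : W) : ℤˣ := ((permRep cs w) (t, 1)).2

lemma sgn_one (t : W) : sgn cs 1 t = 1 := by
  simp [sgn, map_one]

lemma permRep_apply (w : W) : ∀ (t : W) (ε : ℤˣ),
    permRep cs w (t, ε) = (w * t * w⁻¹, ε * sgn cs w t) := by
  refine cs.simple_induction_left (p := fun w => ∀ (t : W) (ε : ℤˣ), permRep cs w (t, ε) = (w * t * w⁻¹, ε * sgn cs w t)) w ?_ ?_
  · intro t ε
    simp [sgn, map_one]
  · intro w i hw t ε
    have hmul : ∀ p : W × ℤˣ, permRep cs (cs.simple i * w) p = eta cs i (permRep cs w p) := by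
      intro p
      rw [map_mul, permRep_simple, Equiv.Perm.mul_apply]
    have hsgn : sgn cs (cs.simple i * w) t
        = sgn cs w t * (if w * t * w⁻¹ = cs.simple i then -1 else 1) := by
      show (permRep cs (cs.simple i * w) (t, 1)).2 = _
      rw [hmul (t, 1), hw t 1, eta_apply]
      dsimp only
      rw [one_mul]
    rw [hmul, hw t ε, eta_apply, hsgn, Prod.ext_iff]
    dsimp only
    constructor
    · rw [mul_inv_rev, cs.inv_simple]
      group
    · rw [mul_assoc]

lemma sgn_mul (w v t : W) : sgn cs (w * v) t = sgn cs v t * sgn cs w (v * t * v⁻¹) := by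
  have h : permRep cs (w * v) (t, 1) = permRep cs w (permRep cs v (t, 1)) := by
    rw [map_mul, Equiv.Perm.mul_apply]
  rw [sgn, h, permRep_apply cs v t 1, one_mul, permRep_apply cs w (v * t * v⁻¹) (sgn cs v t)]

lemma sgn_simple (i : B) (t : W) :
    sgn cs (cs.simple i) t = if t = cs.simple i then -1 else 1 := by
  rw [sgn, permRep_simple, eta_apply, one_mul]

lemma sgn_refl_self {t : W} (ht : cs.IsReflection t) : sgn cs t t = -1 := by
  obtain ⟨w, i, rfl⟩ := ht
  have ht' : w * cs.simple i * w⁻¹ = w * (cs.simple i * w⁻¹) := by rw [mul_assoc]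
  rw [ht', sgn_mul]
  have h1 : sgn cs (cs.simple i * w⁻¹) (w * (cs.simple i * w⁻¹))
      = sgn cs w⁻¹ (w * (cs.simple i * w⁻¹)) * (-1) := by
    rw [sgn_mul]
    congr 1
    rw [show w⁻¹ * (w * (cs.simple i * w⁻¹)) * w⁻¹⁻¹ = cs.simple i from by group, sgn_simple,
      if_pos rfl]
  have h2 : (cs.simple i * w⁻¹) * (w * (cs.simple i * w⁻¹)) * (cs.simple i * w⁻¹)⁻¹
      = cs.simple i := by
    group
  have h3 : sgn cs w⁻¹ (w * (cs.simple i * w⁻¹)) * sgn cs w (cs.simple i) = 1 := by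
    have := sgn_mul cs w w⁻¹ (w * (cs.simple i * w⁻¹))
    rw [mul_inv_cancel, sgn_one] at this
    rw [show w⁻¹ * (w * (cs.simple i * w⁻¹)) * w⁻¹⁻¹ = cs.simple i from by group] at this
    exact this.symm
  rw [h1, h2, mul_right_comm, h3, one_mul]

lemma mem_rightInvSeq_of_sgn (ω : List B) (t : W)
    (h : sgn cs (cs.wordProd ω) t = -1) : t ∈ cs.rightInvSeq ω := by
  induction ω with
  | nil =>
    rw [cs.wordProd_nil, sgn_one] at h
    exact absurd h (by decide)
  | cons i ω ih =>
    rw [cs.wordProd_cons, sgn_mul, sgn_simple] at h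
    have hris : cs.rightInvSeq (i :: ω)
        = ((cs.wordProd ω)⁻¹ * cs.simple i * cs.wordProd ω) :: cs.rightInvSeq ω := rfl
    rw [hris, List.mem_cons]
    by_cases hc : cs.wordProd ω * t * (cs.wordProd ω)⁻¹ = cs.simple i
    · left
      rw [← hc]
      group
    · rw [if_neg hc, mul_one] at h
      exact Or.inr (ih h)

lemma strong_exchange {ω : List B} (hred : cs.IsReduced ω) {t : W} (ht : cs.IsReflection t)
    (hlt : cs.length (cs.wordProd ω * t) < cs.length (cs.wordProd ω)) :
    t ∈ cs.rightInvSeq ω := by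
  apply mem_rightInvSeq_of_sgn
  rcases Int.units_eq_one_or (sgn cs (cs.wordProd ω) t) with h | h
  · exfalso
    have hwr : cs.wordProd ω = (cs.wordProd ω * t) * t := by
      rw [mul_assoc, ht.mul_self, mul_one]
    have hsm := sgn_mul cs (cs.wordProd ω * t) t t
    rw [← hwr] at hsm
    rw [show t * t * t⁻¹ = t from by group, sgn_refl_self cs ht, h] at hsm
    have hw : sgn cs (cs.wordProd ω * t) t = -1 := by
      rcases Int.units_eq_one_or (sgn cs (cs.wordProd ω * t) t) with h' | h'
      · rw [h'] at hsm; exact absurd hsm (by decide)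
      · exact h'
    obtain ⟨η, hηred, hη⟩ := cs.exists_reduced_word' (cs.wordProd ω * t)
    rw [hη] at hw
    have hmem := mem_rightInvSeq_of_sgn cs η t hw
    have hinv := cs.isRightInversion_of_mem_rightInvSeq hηred hmem
    rw [← hη] at hinv
    have h2 := hinv.2
    rw [mul_assoc, ht.mul_self, mul_one] at h2
    omega
  · exact h

lemma lifting {w t : W} (ht : cs.IsReflection t) (i : B)
    (h1 : cs.length (w * cs.simple i) < cs.length w)
    (h2 : cs.length w = cs.length (w * t) + 1)
    (h3 : cs.length (w * t) < cs.length (w * t * cs.simple i)) : t = cs.simple i := by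
  obtain ⟨η, hηred, hηu⟩ := cs.exists_reduced_word' (w * cs.simple i)
  have hωw : cs.wordProd (η.concat i) = w := by
    rw [cs.wordProd_concat, ← hηu, cs.simple_mul_simple_cancel_right]
  have hlu : cs.length (w * cs.simple i) + 1 = cs.length w := by
    rcases cs.length_mul_simple w i with h | h
    · omega
    · omega
  have hredω : cs.IsReduced (η.concat i) := by
    unfold CoxeterSystem.IsReduced
    rw [hωw, List.length_concat, ← hηred, ← hηu]
    omega
  have hmem := strong_exchange cs hredω ht (by rw [hωw]; omega)
  rw [cs.rightInvSeq_concat] at hmem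
  rw [List.concat_eq_append, List.mem_append] at hmem
  rcases hmem with hmem | hmem
  · exfalso
    rw [List.mem_map] at hmem
    obtain ⟨t', ht'mem, rfl⟩ := hmem
    have hti := cs.isRightInversion_of_mem_rightInvSeq hηred ht'mem
    rw [← hηu] at hti
    have hlt' := hti.2
    have hts : w * (MulAut.conj (cs.simple i) t') * cs.simple i = w * cs.simple i * t' := by
      simp only [MulAut.conj_apply, cs.inv_simple]
      simp [mul_assoc, cs.simple_mul_simple_cancel_left, cs.simple_mul_simple_self]
    rw [hts] at h3
    omega
  · rw [List.mem_singleton] at hmem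
    exact hmem

end BGGsign

/-- Edges of the Bruhat graph: `w' → w` when `w = w'·t` for a reflection `t` and
`ℓ(w) = ℓ(w') + 1`. -/
def BruhatEdge {B W : Type} [Group W] {M : CoxeterMatrix B} (cs : CoxeterSystem M W)
    (w' w : W) : Prop :=
  (∃ t : W, cs.IsReflection t ∧ w = w' * t) ∧ cs.length w = cs.length w' + 1

/-- Essential uniqueness of a BGG sign assignment: if `ε` and `ε'` both assign `±1` to each
edge of the Bruhat graph so that the product over the four edges of every square is `-1`,
and the BGG structural properties hold, then `ε` and `ε'` differ by a coboundary
`ε(w',w) = γ(w')⁻¹ ε'(w',w) γ(w)` with `γ : W → {±1}`, `γ(e) = 1`. -/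
theorem stmt_9 {B W : Type} [Group W] {M : CoxeterMatrix B} (cs : CoxeterSystem M W)
    (ε ε' : W → W → ℤˣ)
    (hsq : ∀ w w1 w2 w'' : W, BruhatEdge cs w w1 → BruhatEdge cs w1 w'' →
      BruhatEdge cs w w2 → BruhatEdge cs w2 w'' → w1 ≠ w2 →
      ε w w1 * ε w1 w'' * ε w w2 * ε w2 w'' = -1)
    (hsq' : ∀ w w1 w2 w'' : W, BruhatEdge cs w w1 → BruhatEdge cs w1 w'' →
      BruhatEdge cs w w2 → BruhatEdge cs w2 w'' → w1 ≠ w2 →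
      ε' w w1 * ε' w1 w'' * ε' w w2 * ε' w2 w'' = -1)
    (hdiamond : ∀ w w'' : W, Relation.ReflTransGen (BruhatEdge cs) w w'' →
      cs.length w'' = cs.length w + 2 →
      {w' : W | BruhatEdge cs w w' ∧ BruhatEdge cs w' w''}.ncard = 0 ∨
      {w' : W | BruhatEdge cs w w' ∧ BruhatEdge cs w' w''}.ncard = 2)
    (hsimple : ∀ w : W, w ≠ 1 → ∃ w' : W, ∃ i : B,
      BruhatEdge cs w' w ∧ w = w' * cs.simple i) :
    ∃ γ : W → ℤˣ, γ 1 = 1 ∧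
      ∀ w' w : W, BruhatEdge cs w' w → ε w' w = (γ w')⁻¹ * ε' w' w * γ w := by
  classical
  have hpred : ∀ w : W, w ≠ 1 → ∃ p : W × B, BruhatEdge cs p.1 w ∧ w = p.1 * cs.simple p.2 := by
    intro w hw
    obtain ⟨w', i, h1, h2⟩ := hsimple w hw
    exact ⟨⟨w', i⟩, h1, h2⟩
  have helper : ∀ x y z t : ℤˣ, x * y * z * t = 1 → z * t = x * y := by
    intro x y z t h
    rcases Int.units_eq_one_or x with rfl | rfl <;>
      rcases Int.units_eq_one_or y with rfl | rfl <;>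
      rcases Int.units_eq_one_or z with rfl | rfl <;>
      rcases Int.units_eq_one_or t with rfl | rfl <;>
      revert h <;> decide
  obtain ⟨γ, hγone, hγdef⟩ : ∃ γ : W → ℤˣ, γ 1 = 1 ∧ ∀ (w : W) (h1 : w ≠ 1),
      γ w = γ (Classical.choose (hpred w h1)).1
        * (ε (Classical.choose (hpred w h1)).1 w * ε' (Classical.choose (hpred w h1)).1 w) := by
    let g : ℕ → W → ℤˣ := fun n => Nat.rec (motive := fun _ => W → ℤˣ) (fun _ => 1)
      (fun n ih w => if cs.length w ≤ n then ih w else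
        if h1 : w = 1 then 1 else
          ih (Classical.choose (hpred w h1)).1
            * (ε (Classical.choose (hpred w h1)).1 w * ε' (Classical.choose (hpred w h1)).1 w)) n
    have g_succ : ∀ (n : ℕ) (w : W), g (n+1) w = if cs.length w ≤ n then g n w else
        if h1 : w = 1 then 1 else
          g n (Classical.choose (hpred w h1)).1
            * (ε (Classical.choose (hpred w h1)).1 w * ε' (Classical.choose (hpred w h1)).1 w) :=
      fun n w => rfl
    refine ⟨fun w => g (cs.length w) w, ?_, ?_⟩
    · show g (cs.length 1) 1 = 1
      rw [cs.length_one]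
      rfl
    · have hmono : ∀ n w, cs.length w ≤ n → g n w = g (cs.length w) w := by
        intro n
        induction n with
        | zero =>
          intro w hw
          have h0 : cs.length w = 0 := Nat.le_zero.mp hw
          rw [h0]
        | succ n ih =>
          intro w hw
          rcases Nat.lt_or_ge (cs.length w) (n+1) with h | h
          · have hle : cs.length w ≤ n := by omega
            rw [g_succ n w, if_pos hle, ih w hle]
          · have heq : cs.length w = n + 1 := by omega
            rw [heq]
      intro w h1
      obtain ⟨hedge, -⟩ := Classical.choose_spec (hpred w h1)
      have hl : cs.length w = cs.length (Classical.choose (hpred w h1)).1 + 1 := hedge.2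
      show g (cs.length w) w = _
      rw [hl, g_succ, if_neg (by omega), dif_neg h1,
        hmono _ _ (le_of_eq rfl)]
  have key : ∀ n w1 w, cs.length w = n → BruhatEdge cs w1 w →
      γ w = γ w1 * (ε w1 w * ε' w1 w) := by
    intro n
    induction n using Nat.strong_induction_on with
    | _ n IH =>
      intro w1 w hn hedge
      obtain ⟨⟨t, ht, hwt⟩, hl1⟩ := hedge
      have hwne : w ≠ 1 := by
        intro h
        rw [h, cs.length_one] at hl1
        omega
      have k0 := hγdef w hwne
      have hspec := Classical.choose_spec (hpred w hwne)
      set p := Classical.choose (hpred w hwne) with hpdef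
      clear_value p
      obtain ⟨hedge', hws⟩ := hspec
      by_cases hc : w1 = p.1
      · rw [hc]
        exact k0
      · have hlp : cs.length w = cs.length p.1 + 1 := hedge'.2
        have hwp : w * cs.simple p.2 = p.1 := by
          rw [hws]
          exact cs.simple_mul_simple_cancel_right _
        have hwt1 : w * t = w1 := by
          rw [hwt, mul_assoc, ht.mul_self, mul_one]
        have ht2 : ∀ x : W, t * (t * x) = x := fun x => by
          rw [← mul_assoc, ht.mul_self, one_mul]
        rcases cs.length_mul_simple w1 p.2 with hB | hA
        · -- impossible by the lifting property
          exfalso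
          have hts : t = cs.simple p.2 := by
            apply BGGsign.lifting cs ht
            · rw [hwp]; omega
            · rw [hwt1]; exact hl1
            · rw [hwt1]; omega
          apply hc
          rw [← hwt1, hts, hwp]
        · -- the square argument
          set u := w1 * cs.simple p.2 with hudef
          have e1 : BruhatEdge cs u w1 := by
            refine ⟨⟨cs.simple p.2, cs.isReflection_simple p.2, ?_⟩, by omega⟩
            rw [hudef]
            exact (cs.simple_mul_simple_cancel_right _).symm
          have e2 : BruhatEdge cs w1 w := ⟨⟨t, ht, hwt⟩, hl1⟩
          have e3 : BruhatEdge cs u p.1 := by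
            refine ⟨⟨cs.simple p.2 * t * cs.simple p.2, ?_, ?_⟩, by omega⟩
            · have := ht.conj (cs.simple p.2)
              rwa [cs.inv_simple] at this
            · have hcomp : u * (cs.simple p.2 * t * cs.simple p.2) = w * cs.simple p.2 := by
                rw [hudef, ← hwt1]
                simp [mul_assoc, cs.simple_mul_simple_cancel_left, ht2]
              rw [← hwp, ← hcomp]
          have e4 : BruhatEdge cs p.1 w := hedge'
          have hE := hsq u w1 p.1 w e1 e2 e3 e4 hc
          have hE' := hsq' u w1 p.1 w e1 e2 e3 e4 hc
          have k1 : γ w1 = γ u * (ε u w1 * ε' u w1) :=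
            IH (cs.length w1) (by omega) u w1 rfl e1
          have k3 : γ p.1 = γ u * (ε u p.1 * ε' u p.1) :=
            IH (cs.length p.1) (by omega) u p.1 rfl e3
          have hkey : (ε u p.1 * ε' u p.1) * (ε p.1 w * ε' p.1 w)
              = (ε u w1 * ε' u w1) * (ε w1 w * ε' w1 w) := by
            apply helper
            have h12 : (ε u w1 * ε w1 w * ε u p.1 * ε p.1 w)
                * (ε' u w1 * ε' w1 w * ε' u p.1 * ε' p.1 w) = 1 := by
              rw [hE, hE']; decide
            rw [← h12]
            simp only [mul_comm, mul_left_comm, mul_assoc]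
          rw [k0, k3, k1,
            mul_assoc (γ u) (ε u p.1 * ε' u p.1) (ε p.1 w * ε' p.1 w),
            mul_assoc (γ u) (ε u w1 * ε' u w1) (ε w1 w * ε' w1 w), hkey]
  refine ⟨γ, hγone, ?_⟩
  intro w' w hedge
  have hk := key (cs.length w) w' w rfl hedge
  rw [hk]
  rcases Int.units_eq_one_or (γ w') with h1 | h1 <;>
    rcases Int.units_eq_one_or (ε w' w) with h2 | h2 <;>
    rcases Int.units_eq_one_or (ε' w' w) with h3 | h3 <;>
    rw [h1, h2, h3] <;> decide
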